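/- The function g : [0,1) → ℝ defined by g(x) = (1/2)·ln(1 + (1 − x)²) − ln(1 − x) + π − arccot(1 − x) − arccot(x), where arccot(y) = π/2 − arctan(y), is monotone increasing on [0,1); consequently g(x) ≥ g(0) = (1/2)·ln 2 + π/4 for all x ∈ [0,1). -/

import Mathlib

open Real

/-- The inverse cotangent, `arccot y = π/2 − arctan y`. -/
noncomputable def arccot (y : ℝ) : ℝ := π / 2 - Real.arctan y

/-- The total angular thickness of the unit square at the boundary point `(x, 0)`. -/
noncomputable def g (x : ℝ) : ℝ :=
  (1 / 2) * Real.log (1 + (1 - x) ^ 2) - Real.log (1 - x) + π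
    - arccot (1 - x) - arccot x

lemma hasDerivAt_g {x : ℝ} (hx : x < 1) :
    HasDerivAt g ((1/2) * ((1+(1-x)^2)⁻¹ * (2*(1-x)^1*(-1))) - (1-x)⁻¹ * (-1)
      - (-(1/(1+(1-x)^2) * (-1))) - (-(1/(1+x^2)))) x := by
  have h1x : (0:ℝ) < 1 - x := by linarith
  have h1 : HasDerivAt (fun y : ℝ => 1 - y) (-1) x := (hasDerivAt_id x).const_sub 1
  have h2 : HasDerivAt (fun y : ℝ => 1 + (1 - y)^2) (2*(1-x)^1*(-1)) x :=
    (h1.pow 2).const_add 1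
  have hpos : (0:ℝ) < 1 + (1-x)^2 := by positivity
  have h3 : HasDerivAt (fun y : ℝ => Real.log (1 + (1-y)^2))
      ((1+(1-x)^2)⁻¹ * (2*(1-x)^1*(-1))) x :=
    by have := (Real.hasDerivAt_log hpos.ne').comp x h2; exact this
  have h4 : HasDerivAt (fun y : ℝ => Real.log (1 - y)) ((1-x)⁻¹ * (-1)) x :=
    (Real.hasDerivAt_log h1x.ne').comp x h1
  have h5 : HasDerivAt (fun y : ℝ => Real.arctan (1 - y)) (1/(1+(1-x)^2) * (-1)) x :=
    (Real.hasDerivAt_arctan (1-x)).comp x h1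
  have h6 : HasDerivAt (fun y : ℝ => arccot (1 - y)) (-(1/(1+(1-x)^2) * (-1))) x := by
    simpa [arccot] using h5.const_sub (π/2)
  have h7 : HasDerivAt (fun y : ℝ => arccot y) (-(1/(1+x^2))) x := by
    simpa [arccot] using (Real.hasDerivAt_arctan x).const_sub (π/2)
  exact ((((h3.const_mul (1/2)).sub h4).add_const π).sub h6).sub h7

/-- The function `g` is monotone increasing on `[0,1)`; consequently
`g(x) ≥ g(0) = (1/2)·ln 2 + π/4` for all `x ∈ [0,1)`. -/
theorem g_monotoneOn_and_ge :
    MonotoneOn g (Set.Ico (0 : ℝ) 1) ∧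
      g 0 = (1 / 2) * Real.log 2 + π / 4 ∧
      ∀ x ∈ Set.Ico (0 : ℝ) 1, (1 / 2) * Real.log 2 + π / 4 ≤ g x := by
  have hmono : MonotoneOn g (Set.Ico (0 : ℝ) 1) := by
    apply monotoneOn_of_deriv_nonneg (convex_Ico 0 1)
    · exact fun x hx => (hasDerivAt_g hx.2).continuousAt.continuousWithinAt
    · rw [interior_Ico]
      exact fun x hx => (hasDerivAt_g hx.2).differentiableAt.differentiableWithinAt
    · rw [interior_Ico]
      intro x hx
      rw [(hasDerivAt_g hx.2).deriv]
      have h1x : (0:ℝ) < 1 - x := by linarith [hx.2]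
      have hpos : (0:ℝ) < 1 + (1-x)^2 := by positivity
      have hx2 : (0:ℝ) < 1 + x^2 := by positivity
      have key : (1/2) * ((1+(1-x)^2)⁻¹ * (2*(1-x)^1*(-1))) - (1-x)⁻¹ * (-1)
          - (-(1/(1+(1-x)^2) * (-1))) - (-(1/(1+x^2)))
          = x/((1-x)*(1+(1-x)^2)) + 1/(1+x^2) := by
        field_simp
        ring
      rw [key]
      have hd : (0:ℝ) < (1-x)*(1+(1-x)^2) := by positivity
      have h1 : 0 ≤ x/((1-x)*(1+(1-x)^2)) := div_nonneg hx.1.le hd.le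
      have h2 : 0 ≤ 1/(1+x^2) := by positivity
      linarith
  have hg0 : g 0 = (1 / 2) * Real.log 2 + π / 4 := by
    simp only [g, arccot]
    norm_num [Real.arctan_one, Real.arctan_zero]
    ring
  refine ⟨hmono, hg0, fun x hx => ?_⟩
  rw [← hg0]
  exact hmono ⟨le_refl 0, one_pos⟩ hx hx.1
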